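/- Consider Akerlof's conformist model with two agents: fix real constants a > 0, 0 < d ≤ b, and k, and for i ∈ {1,2} let agent i's personal utility be u(x) = −a·x² + b·x + k (maximized at x⋆ = b/(2a)), let the cost of current social distance be c₁(t) = d·t, and let agent i's payoff be U_i(x_i, x_{-i}) = −d·|x_{-i} − x_i| − a·x_i² + b·x_i + k on ℝ≥0 × ℝ≥0 (no future social-distance term, c₂ = 0). Then a pair (x₁, x₂) ∈ ℝ≥0 × ℝ≥0 is an equilibrium after deferral — i.e., for each i, x_i belongs to max(ℝ≥0, ≽_{i,x_{-i}}) and U_i(x_i, x_{-i}) ≥ U_i(y, x_{-i}) for all y ∈ max(ℝ≥0, ≽_{i,x_{-i}}) — if and only if x₁ = x₂ and x₁ ∈ [(b−d)/(2a), (b+d)/(2a)]. In particular, the set of equilibria after deferral coincides with the set of standard equilibria, so no deferral loss arises. -/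

import Mathlib

open Set

/-- The strict part `x ≻ y` of the one-many ordering on the reals, given personal
utility `u`, cost `c` of current social distance, and reference point `r`. -/
def SPrefR (u c : ℝ → ℝ) (r x y : ℝ) : Prop :=
  (u y ≤ u x ∧ c |x - r| ≤ c |y - r|) ∧ ¬ (u x ≤ u y ∧ c |y - r| ≤ c |x - r|)

/-- The consideration set: maximal elements of `ℝ≥0 = [0,∞)` under the one-many
ordering with utility `u`, cost `c` and reference point `r`. -/
def maxSetR (u c : ℝ → ℝ) (r : ℝ) : Set ℝ :=
  {x : ℝ | 0 ≤ x ∧ ¬ ∃ y : ℝ, 0 ≤ y ∧ SPrefR u c r y x}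

set_option maxHeartbeats 1000000

lemma maxSet_eq (a b d k : ℝ) (ha : 0 < a) (hd0 : 0 < d) (hb : 0 ≤ b)
    (r : ℝ) (hr : 0 ≤ r) :
    maxSetR (fun x => -a * x ^ 2 + b * x + k) (fun t => d * t) r
      = Icc (min r (b / (2 * a))) (max r (b / (2 * a))) := by
  have ha2 : (0:ℝ) < 2 * a := by linarith
  set s := b / (2 * a) with hs
  have hs0 : 0 ≤ s := div_nonneg hb (by linarith)
  have hsb : 2 * a * s = b := by rw [hs]; field_simp
  ext z
  simp only [maxSetR, SPrefR, mem_setOf_eq, mem_Icc]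
  constructor
  · rintro ⟨hz0, hnd⟩
    by_contra hcon
    push_neg at hcon
    apply hnd
    rcases le_or_gt r s with hrs | hrs
    · rw [min_eq_left hrs, max_eq_right hrs] at hcon
      rcases lt_or_ge z r with h1 | h1
      · -- z < r : dominator r
        refine ⟨r, hr, ⟨⟨by nlinarith [mul_nonneg (show (0:ℝ) ≤ r - z by linarith) (show (0:ℝ) ≤ b - a*(r+z) by nlinarith [mul_le_mul_of_nonneg_left (show r+z ≤ 2*s by linarith) ha.le])], ?_⟩, ?_⟩⟩
        · simp only [sub_self, abs_zero, mul_zero]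
          positivity
        · rintro ⟨-, hle⟩
          rw [sub_self, abs_zero, mul_zero] at hle
          have : 0 < |z - r| := abs_pos.2 (by linarith)
          nlinarith
      · have h2 : s < z := hcon h1
        rcases le_or_gt r (2 * s - z) with h3 | h3
        · -- reflection
          refine ⟨2 * s - z, by linarith, ⟨⟨by nlinarith [mul_eq_zero_of_left (show 2*a*s - b = 0 by linarith) (z - s)], ?_⟩, ?_⟩⟩
          · rw [abs_of_nonneg (by linarith : (0:ℝ) ≤ 2 * s - z - r),
              abs_of_nonneg (by linarith : (0:ℝ) ≤ z - r)]
            nlinarith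
          · rintro ⟨-, hle⟩
            rw [abs_of_nonneg (by linarith : (0:ℝ) ≤ 2 * s - z - r),
              abs_of_nonneg (by linarith : (0:ℝ) ≤ z - r)] at hle
            nlinarith
        · -- dominator r
          refine ⟨r, hr, ⟨⟨by nlinarith [mul_nonneg (show (0:ℝ) ≤ z - r by linarith) (show (0:ℝ) ≤ a*(r+z) - b by nlinarith [mul_le_mul_of_nonneg_left (show 2*s ≤ r+z by linarith) ha.le])], ?_⟩, ?_⟩⟩
          · simp only [sub_self, abs_zero, mul_zero]
            positivity
          · rintro ⟨-, hle⟩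
            rw [sub_self, abs_zero, mul_zero] at hle
            have : 0 < |z - r| := abs_pos.2 (by nlinarith)
            nlinarith
    · rw [min_eq_right hrs.le, max_eq_left hrs.le] at hcon
      rcases lt_or_ge r z with h1 | h1
      · -- z > r : dominator r
        refine ⟨r, hr, ⟨⟨by nlinarith [mul_nonneg (show (0:ℝ) ≤ z - r by linarith) (show (0:ℝ) ≤ a*(r+z) - b by nlinarith [mul_le_mul_of_nonneg_left (show 2*s ≤ r+z by linarith) ha.le])], ?_⟩, ?_⟩⟩
        · simp only [sub_self, abs_zero, mul_zero]
          positivity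
        · rintro ⟨-, hle⟩
          rw [sub_self, abs_zero, mul_zero] at hle
          have : 0 < |z - r| := abs_pos.2 (by linarith)
          nlinarith
      · have h2 : z < s := by
          rcases lt_or_ge z s with h | h
          · exact h
          · exact absurd (hcon h) (lt_irrefl _ ∘ lt_of_le_of_lt h1)
        rcases le_or_gt (2 * s - z) r with h3 | h3
        · refine ⟨2 * s - z, by linarith, ⟨⟨by nlinarith [mul_eq_zero_of_left (show 2*a*s - b = 0 by linarith) (z - s)], ?_⟩, ?_⟩⟩
          · rw [abs_of_nonpos (by linarith : 2 * s - z - r ≤ (0:ℝ)),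
              abs_of_nonpos (by linarith : z - r ≤ (0:ℝ))]
            nlinarith
          · rintro ⟨-, hle⟩
            rw [abs_of_nonpos (by linarith : 2 * s - z - r ≤ (0:ℝ)),
              abs_of_nonpos (by linarith : z - r ≤ (0:ℝ))] at hle
            nlinarith
        · refine ⟨r, hr, ⟨⟨by nlinarith [mul_nonneg (show (0:ℝ) ≤ r - z by linarith) (show (0:ℝ) ≤ b - a*(r+z) by nlinarith [mul_le_mul_of_nonneg_left (show r+z ≤ 2*s by linarith) ha.le])], ?_⟩, ?_⟩⟩
          · simp only [sub_self, abs_zero, mul_zero]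
            positivity
          · rintro ⟨-, hle⟩
            rw [sub_self, abs_zero, mul_zero] at hle
            have : 0 < |z - r| := abs_pos.2 (by linarith)
            nlinarith
  · rintro ⟨hlo, hhi⟩
    have hz0 : 0 ≤ z := le_trans (le_min hr hs0) hlo
    refine ⟨hz0, ?_⟩
    rintro ⟨y, hy0, ⟨⟨huzy, hcy⟩, hstrict⟩⟩
    push_neg at hstrict
    have hcy' : |y - r| ≤ |z - r| := le_of_mul_le_mul_left hcy hd0
    rcases le_or_gt r s with hrs | hrs
    · rw [min_eq_left hrs] at hlo
      rw [max_eq_right hrs] at hhi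
      have hzr : |z - r| = z - r := abs_of_nonneg (by linarith)
      have hyz : y ≤ z := by
        have := le_trans (le_abs_self (y - r)) hcy'
        rw [hzr] at this; linarith
      have huyz : (fun x => -a * x ^ 2 + b * x + k) y ≤ (fun x => -a * x ^ 2 + b * x + k) z := by
        simp only
        nlinarith [mul_nonneg (show (0:ℝ) ≤ z - y by linarith)
          (show (0:ℝ) ≤ b - a*(z+y) by nlinarith [mul_le_mul_of_nonneg_left (show z+y ≤ 2*s by linarith) ha.le])]
      have hlt := hstrict huyz
      rw [hzr] at hlt
      have hlt' : |y - r| < z - r := lt_of_mul_lt_mul_left hlt hd0.le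
      have hyz' : y < z := by
        have := lt_of_le_of_lt (le_abs_self (y - r)) hlt'
        linarith
      have hp : (0:ℝ) < (z - y) * (b - a*(z+y)) := mul_pos (by linarith)
        (by nlinarith [mul_lt_mul_of_pos_left (show z+y < 2*s by linarith) ha])
      nlinarith [hp]
    · rw [min_eq_right hrs.le] at hlo
      rw [max_eq_left hrs.le] at hhi
      have hzr : |z - r| = r - z := by
        rw [abs_sub_comm]; exact abs_of_nonneg (by linarith)
      have hyz : z ≤ y := by
        have := le_trans (neg_le_abs (y - r)) hcy'
        rw [hzr] at this; linarith
      have huyz : (fun x => -a * x ^ 2 + b * x + k) y ≤ (fun x => -a * x ^ 2 + b * x + k) z := by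
        simp only
        nlinarith [mul_nonneg (show (0:ℝ) ≤ y - z by linarith)
          (show (0:ℝ) ≤ a*(z+y) - b by nlinarith [mul_le_mul_of_nonneg_left (show 2*s ≤ z+y by linarith) ha.le])]
      have hlt := hstrict huyz
      rw [hzr] at hlt
      have hlt' : |y - r| < r - z := lt_of_mul_lt_mul_left hlt hd0.le
      have hyz' : z < y := by
        have := lt_of_le_of_lt (neg_le_abs (y - r)) hlt'
        linarith
      have hp : (0:ℝ) < (y - z) * (a*(z+y) - b) := mul_pos (by linarith)
        (by nlinarith [mul_lt_mul_of_pos_left (show 2*s < z+y by linarith) ha])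
      nlinarith [hp]

lemma br_all (a b d k x : ℝ) (ha : 0 < a) (hd0 : 0 < d)
    (hx1 : (b - d) / (2 * a) ≤ x) (hx2 : x ≤ (b + d) / (2 * a)) :
    ∀ y : ℝ, 0 ≤ y →
      -d * |x - y| - a * y ^ 2 + b * y + k ≤ -d * |x - x| - a * x ^ 2 + b * x + k := by
  have ha2 : (0:ℝ) < 2 * a := by linarith
  have hxq : 2 * a * x ≤ b + d := by
    rw [le_div_iff₀ ha2] at hx2; linarith
  have hxp : b - d ≤ 2 * a * x := by
    rw [div_le_iff₀ ha2] at hx1; linarith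
  intro y hy
  rw [sub_self, abs_zero]
  rcases abs_cases (x - y) with ⟨h, h'⟩ | ⟨h, h'⟩ <;> rw [h]
  · -- y ≤ x
    nlinarith [mul_nonneg (show (0:ℝ) ≤ x - y by linarith)
      (show (0:ℝ) ≤ b + d - a * (x + y) by nlinarith)]
  · -- x ≤ y
    nlinarith [mul_nonneg (show (0:ℝ) ≤ y - x by linarith)
      (show (0:ℝ) ≤ a * (x + y) - (b - d) by nlinarith)]

theorem conformist_equilibrium_after_deferral_characterization
    (a b d k : ℝ) (ha : 0 < a) (hd0 : 0 < d) (hdb : d ≤ b)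
    (x₁ x₂ : ℝ) (h₁ : 0 ≤ x₁) (h₂ : 0 ≤ x₂) :
    (((x₁ ∈ maxSetR (fun x => -a * x ^ 2 + b * x + k) (fun t => d * t) x₂ ∧
        ∀ y ∈ maxSetR (fun x => -a * x ^ 2 + b * x + k) (fun t => d * t) x₂,
          -d * |x₂ - y| - a * y ^ 2 + b * y + k ≤
            -d * |x₂ - x₁| - a * x₁ ^ 2 + b * x₁ + k) ∧
     (x₂ ∈ maxSetR (fun x => -a * x ^ 2 + b * x + k) (fun t => d * t) x₁ ∧
        ∀ y ∈ maxSetR (fun x => -a * x ^ 2 + b * x + k) (fun t => d * t) x₁,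
          -d * |x₁ - y| - a * y ^ 2 + b * y + k ≤
            -d * |x₁ - x₂| - a * x₂ ^ 2 + b * x₂ + k))
    ↔ (x₁ = x₂ ∧ x₁ ∈ Icc ((b - d) / (2 * a)) ((b + d) / (2 * a))))
    ∧
    -- In particular, the equilibria after deferral coincide with the standard equilibria.
    (((x₁ ∈ maxSetR (fun x => -a * x ^ 2 + b * x + k) (fun t => d * t) x₂ ∧
        ∀ y ∈ maxSetR (fun x => -a * x ^ 2 + b * x + k) (fun t => d * t) x₂,
          -d * |x₂ - y| - a * y ^ 2 + b * y + k ≤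
            -d * |x₂ - x₁| - a * x₁ ^ 2 + b * x₁ + k) ∧
     (x₂ ∈ maxSetR (fun x => -a * x ^ 2 + b * x + k) (fun t => d * t) x₁ ∧
        ∀ y ∈ maxSetR (fun x => -a * x ^ 2 + b * x + k) (fun t => d * t) x₁,
          -d * |x₁ - y| - a * y ^ 2 + b * y + k ≤
            -d * |x₁ - x₂| - a * x₂ ^ 2 + b * x₂ + k))
    ↔ ((∀ y : ℝ, 0 ≤ y →
          -d * |x₂ - y| - a * y ^ 2 + b * y + k ≤
            -d * |x₂ - x₁| - a * x₁ ^ 2 + b * x₁ + k) ∧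
        (∀ y : ℝ, 0 ≤ y →
          -d * |x₁ - y| - a * y ^ 2 + b * y + k ≤
            -d * |x₁ - x₂| - a * x₂ ^ 2 + b * x₂ + k))) := by
  have ha2 : (0:ℝ) < 2 * a := by linarith
  have hb : (0:ℝ) ≤ b := by linarith
  have hM1 := maxSet_eq a b d k ha hd0 hb x₂ h₂
  have hM2 := maxSet_eq a b d k ha hd0 hb x₁ h₁
  set s := b / (2 * a) with hsdef
  set p := (b - d) / (2 * a) with hpdef
  set q := (b + d) / (2 * a) with hqdef
  have hsb : 2 * a * s = b := by rw [hsdef]; field_simp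
  have hpb : 2 * a * p = b - d := by rw [hpdef]; field_simp
  have hqb : 2 * a * q = b + d := by rw [hqdef]; field_simp
  have hp0 : 0 ≤ p := div_nonneg (by linarith) ha2.le
  have hs0 : 0 ≤ s := by positivity
  have hps : p < s := by nlinarith
  have hsq : s < q := by nlinarith
  -- C → Q
  have hCQ : x₁ = x₂ ∧ x₁ ∈ Icc p q →
      ((∀ y : ℝ, 0 ≤ y →
          -d * |x₂ - y| - a * y ^ 2 + b * y + k ≤
            -d * |x₂ - x₁| - a * x₁ ^ 2 + b * x₁ + k) ∧
        (∀ y : ℝ, 0 ≤ y →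
          -d * |x₁ - y| - a * y ^ 2 + b * y + k ≤
            -d * |x₁ - x₂| - a * x₂ ^ 2 + b * x₂ + k)) := by
    rintro ⟨rfl, hlo, hhi⟩
    exact ⟨br_all a b d k x₁ ha hd0 hlo hhi, br_all a b d k x₁ ha hd0 hlo hhi⟩
  -- Q → C
  have hQC : ((∀ y : ℝ, 0 ≤ y →
          -d * |x₂ - y| - a * y ^ 2 + b * y + k ≤
            -d * |x₂ - x₁| - a * x₁ ^ 2 + b * x₁ + k) ∧
        (∀ y : ℝ, 0 ≤ y →
          -d * |x₁ - y| - a * y ^ 2 + b * y + k ≤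
            -d * |x₁ - x₂| - a * x₂ ^ 2 + b * x₂ + k)) →
      x₁ = x₂ ∧ x₁ ∈ Icc p q := by
    rintro ⟨hq1, hq2⟩
    have e1 := hq1 x₂ h₂
    have e2 := hq2 x₁ h₁
    rw [sub_self, abs_zero] at e1 e2
    rw [abs_sub_comm x₂ x₁] at e1
    have habs := abs_nonneg (x₁ - x₂)
    have hx : x₁ = x₂ := by
      have : |x₁ - x₂| = 0 := by nlinarith
      have := abs_eq_zero.1 this
      linarith
    subst hx
    refine ⟨rfl, ?_, ?_⟩
    · by_contra hc
      push_neg at hc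
      have := hq1 p hp0
      rw [sub_self, abs_zero, abs_of_nonpos (show x₁ - p ≤ 0 by linarith)] at this
      nlinarith [mul_pos ha (mul_pos (sub_pos.2 hc) (sub_pos.2 hc))]
    · by_contra hc
      push_neg at hc
      have := hq1 q (by linarith)
      rw [sub_self, abs_zero, abs_of_nonneg (show 0 ≤ x₁ - q by linarith)] at this
      nlinarith [mul_pos ha (mul_pos (sub_pos.2 hc) (sub_pos.2 hc))]
  -- P → C
  have hPC : ((x₁ ∈ maxSetR (fun x => -a * x ^ 2 + b * x + k) (fun t => d * t) x₂ ∧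
        ∀ y ∈ maxSetR (fun x => -a * x ^ 2 + b * x + k) (fun t => d * t) x₂,
          -d * |x₂ - y| - a * y ^ 2 + b * y + k ≤
            -d * |x₂ - x₁| - a * x₁ ^ 2 + b * x₁ + k) ∧
     (x₂ ∈ maxSetR (fun x => -a * x ^ 2 + b * x + k) (fun t => d * t) x₁ ∧
        ∀ y ∈ maxSetR (fun x => -a * x ^ 2 + b * x + k) (fun t => d * t) x₁,
          -d * |x₁ - y| - a * y ^ 2 + b * y + k ≤
            -d * |x₁ - x₂| - a * x₂ ^ 2 + b * x₂ + k)) →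
      x₁ = x₂ ∧ x₁ ∈ Icc p q := by
    rintro ⟨⟨hm1, hmax1⟩, ⟨hm2, hmax2⟩⟩
    rw [hM1] at hm1 hmax1
    rw [hM2] at hm2
    have hx : x₁ = x₂ := by
      rcases le_total x₂ s with h | h
      · rw [min_eq_left h, max_eq_right h] at hm1
        have h1 : x₁ ≤ s := hm1.2
        rw [min_eq_left h1, max_eq_right h1] at hm2
        exact le_antisymm hm2.1 hm1.1
      · rw [min_eq_right h, max_eq_left h] at hm1
        have h1 : s ≤ x₁ := hm1.1
        rw [min_eq_right h1, max_eq_left h1] at hm2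
        exact le_antisymm hm1.2 hm2.2
    subst hx
    refine ⟨rfl, ?_, ?_⟩
    · by_contra hc
      push_neg at hc
      have hmem : p ∈ Icc (min x₁ s) (max x₁ s) :=
        ⟨le_trans (min_le_left _ _) hc.le, le_trans hps.le (le_max_right _ _)⟩
      have := hmax1 p hmem
      rw [sub_self, abs_zero, abs_of_nonpos (show x₁ - p ≤ 0 by linarith)] at this
      nlinarith [mul_pos ha (mul_pos (sub_pos.2 hc) (sub_pos.2 hc))]
    · by_contra hc
      push_neg at hc
      have hmem : q ∈ Icc (min x₁ s) (max x₁ s) :=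
        ⟨le_trans (min_le_right _ _) hsq.le, le_trans hc.le (le_max_left _ _)⟩
      have := hmax1 q hmem
      rw [sub_self, abs_zero, abs_of_nonneg (show 0 ≤ x₁ - q by linarith)] at this
      nlinarith [mul_pos ha (mul_pos (sub_pos.2 hc) (sub_pos.2 hc))]
  -- C → P
  have hCP : x₁ = x₂ ∧ x₁ ∈ Icc p q →
      ((x₁ ∈ maxSetR (fun x => -a * x ^ 2 + b * x + k) (fun t => d * t) x₂ ∧
        ∀ y ∈ maxSetR (fun x => -a * x ^ 2 + b * x + k) (fun t => d * t) x₂,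
          -d * |x₂ - y| - a * y ^ 2 + b * y + k ≤
            -d * |x₂ - x₁| - a * x₁ ^ 2 + b * x₁ + k) ∧
     (x₂ ∈ maxSetR (fun x => -a * x ^ 2 + b * x + k) (fun t => d * t) x₁ ∧
        ∀ y ∈ maxSetR (fun x => -a * x ^ 2 + b * x + k) (fun t => d * t) x₁,
          -d * |x₁ - y| - a * y ^ 2 + b * y + k ≤
            -d * |x₁ - x₂| - a * x₂ ^ 2 + b * x₂ + k)) := by
    intro hC
    obtain ⟨heq, hlo, hhi⟩ := hC
    have hQ := hCQ ⟨heq, hlo, hhi⟩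
    subst heq
    have hmem : x₁ ∈ Icc (min x₁ s) (max x₁ s) := ⟨min_le_left _ _, le_max_left _ _⟩
    exact ⟨⟨by rw [hM1]; exact hmem, fun y hy => hQ.1 y hy.1⟩,
           ⟨by rw [hM2]; exact hmem, fun y hy => hQ.2 y hy.1⟩⟩
  exact ⟨⟨hPC, hCP⟩, ⟨fun h => hCQ (hPC h), fun h => hCP (hQC h)⟩⟩
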